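/- arXiv:1411.0114 — 4 statements merged into one kernel-verified Lean document; each statement's English description precedes it below -/
import Mathlib

section
/- The function P ↦ log det(I + T P) is concave on the set of n×n Hermitian positive semidefinite matrices, for any fixed Hermitian positive semidefinite matrix T. -/
open Matrix ComplexOrder

private lemma myPosDef_conj {n : ℕ} {A B : Matrix (Fin n) (Fin n) ℂ}
    (hA : A.PosDef) (hB : IsUnit B) : (B * A * Bᴴ).PosDef := by
  rw [posDef_iff_dotProduct_mulVec]
  constructor
  · have h1 := hA.1
    unfold Matrix.IsHermitian at h1 ⊢
    rw [conjTranspose_mul, conjTranspose_mul, conjTranspose_conjTranspose, h1, mul_assoc]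
  · intro x hx
    have hBH : IsUnit Bᴴ := by
      rw [isUnit_iff_isUnit_det, det_conjTranspose, isUnit_star, ← isUnit_iff_isUnit_det]
      exact hB
    have hxB : Bᴴ *ᵥ x ≠ 0 := by
      intro h
      apply hx
      have hinj : Function.Injective (Bᴴ).mulVec := mulVec_injective_iff_isUnit.mpr hBH
      have : Bᴴ *ᵥ x = Bᴴ *ᵥ 0 := by rw [h, mulVec_zero]
      exact hinj this
    have := hA.dotProduct_mulVec_pos hxB
    simpa only [← mulVec_mulVec, dotProduct_mulVec, star_mulVec,
      conjTranspose_conjTranspose] using this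

/-- det of a convex-type combination `t•C + c•1` of a Hermitian matrix with 1,
expressed via eigenvalues. -/
private lemma det_smul_add_smul_one {n : ℕ} {C : Matrix (Fin n) (Fin n) ℂ}
    (hC : C.IsHermitian) (t c : ℂ) :
    ((t • C + c • (1 : Matrix (Fin n) (Fin n) ℂ))).det
      = ∏ i, (t * (hC.eigenvalues i : ℂ) + c) := by
  obtain ⟨U, hU, hspec⟩ : ∃ U : Matrix (Fin n) (Fin n) ℂ, U * star U = 1 ∧
      C = U * diagonal (RCLike.ofReal ∘ hC.eigenvalues) * star U :=
    ⟨hC.eigenvectorUnitary, (Matrix.mem_unitaryGroup_iff).mp hC.eigenvectorUnitary.2,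
      hC.spectral_theorem⟩
  have key : t • C + c • (1 : Matrix (Fin n) (Fin n) ℂ)
      = U * (t • diagonal (RCLike.ofReal ∘ hC.eigenvalues) + c • 1) * star U := by
    conv_lhs => rw [hspec]
    rw [mul_add, add_mul, mul_smul_comm, smul_mul_assoc, mul_smul_comm,
      smul_mul_assoc, mul_one, hU]
  rw [key, det_mul_right_comm, hU, one_mul]
  have hD : t • diagonal (RCLike.ofReal ∘ hC.eigenvalues)
        + c • (1 : Matrix (Fin n) (Fin n) ℂ)
      = diagonal (fun i => t * (hC.eigenvalues i : ℂ) + c) := by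
    ext i j
    rcases eq_or_ne i j with rfl | h
    · simp [Matrix.diagonal_apply_eq, smul_eq_mul]
    · simp [Matrix.diagonal_apply_ne _ h, Matrix.one_apply_ne h, h]
  rw [hD, det_diagonal]

/-- Core: concavity of log det on positive definite matrices. -/
private lemma logdet_concave {n : ℕ} {M₁ M₂ : Matrix (Fin n) (Fin n) ℂ}
    (h₁ : M₁.PosDef) (h₂ : M₂.PosDef) (t : ℝ) (ht0 : 0 ≤ t) (ht1 : t ≤ 1) :
    t * Real.log M₁.det.re + (1 - t) * Real.log M₂.det.re
      ≤ Real.log (((t : ℂ) • M₁ + ((1 - t : ℝ) : ℂ) • M₂).det.re) := by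
  set c : ℂ := ((1 - t : ℝ) : ℂ) with hc
  -- square root of M₂
  open scoped MatrixOrder in set R : Matrix (Fin n) (Fin n) ℂ := CFC.sqrt M₂ with hRdef
  have hRR : R * R = M₂ := by
    open scoped MatrixOrder in exact CFC.sqrt_mul_sqrt_self M₂ h₂.posSemidef.nonneg
  have hRH : Rᴴ = R := by
    open scoped MatrixOrder in exact (CFC.sqrt_nonneg M₂).posSemidef.1
  have hdet2 : (0 : ℂ) < M₂.det := h₂.det_pos
  have hdet2re : 0 < M₂.det.re ∧ M₂.det.im = 0 := by
    have := Complex.lt_def.mp hdet2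
    simpa using ⟨this.1, this.2.symm⟩
  have hRdet : IsUnit R.det := by
    have : R.det * R.det = M₂.det := by rw [← det_mul, hRR]
    have hne : R.det ≠ 0 := by
      intro h
      rw [h, mul_zero] at this
      exact hdet2.ne' this.symm
    exact hne.isUnit
  have hRu : IsUnit R := (isUnit_iff_isUnit_det R).mpr hRdet
  set C : Matrix (Fin n) (Fin n) ℂ := R⁻¹ * M₁ * R⁻¹ with hCdef
  have hRinvH : (R⁻¹)ᴴ = R⁻¹ := by rw [conjTranspose_nonsing_inv, hRH]
  have hC : C.PosDef := by
    have := myPosDef_conj h₁ (isUnit_nonsing_inv_iff.mpr hRu)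
    rwa [hRinvH] at this
  have hM₁ : M₁ = R * C * R := by
    rw [hCdef, ← mul_assoc, ← mul_assoc, mul_nonsing_inv _ hRdet, one_mul,
      mul_assoc, nonsing_inv_mul _ hRdet, mul_one]
  have hmix : (t : ℂ) • M₁ + c • M₂ = R * ((t : ℂ) • C + c • 1) * R := by
    rw [mul_add, add_mul, mul_smul_comm, smul_mul_assoc, ← hM₁,
      mul_smul_comm, smul_mul_assoc, mul_one, hRR]
  set lam := hC.1.eigenvalues with hlam
  have hlampos : ∀ i, 0 < lam i := hC.eigenvalues_pos
  have hdetC : C.det = ((∏ i, lam i : ℝ) : ℂ) := by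
    rw [hC.1.det_eq_prod_eigenvalues]
    push_cast
    rfl
  have hdetmixC : ((t : ℂ) • C + c • (1 : Matrix (Fin n) (Fin n) ℂ)).det
      = ((∏ i, (t * lam i + (1 - t)) : ℝ) : ℂ) := by
    rw [det_smul_add_smul_one hC.1, Complex.ofReal_prod]
    refine Finset.prod_congr rfl fun i _ => ?_
    rw [hc]
    push_cast
    simp only [hlam]
  -- det M₂ as a real
  obtain ⟨d, hdpos, hdeq⟩ : ∃ d : ℝ, 0 < d ∧ M₂.det = (d : ℂ) := by
    refine ⟨M₂.det.re, hdet2re.1, ?_⟩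
    apply Complex.ext <;> simp [hdet2re.2]
  have hdre : M₂.det.re = d := by rw [hdeq, Complex.ofReal_re]
  have hRR2 : R.det * R.det = M₂.det := by rw [← det_mul, hRR]
  have hdetM₁ : M₁.det = ((d * ∏ i, lam i : ℝ) : ℂ) := by
    rw [hM₁, det_mul, det_mul]
    calc R.det * C.det * R.det = R.det * R.det * C.det := by ring
      _ = M₂.det * C.det := by rw [hRR2]
      _ = _ := by rw [hdeq, hdetC, ← Complex.ofReal_mul]
  have hdetmix : ((t : ℂ) • M₁ + c • M₂).det
      = ((d * ∏ i, (t * lam i + (1 - t)) : ℝ) : ℂ) := by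
    rw [hmix, det_mul, det_mul]
    calc R.det * ((t : ℂ) • C + c • 1).det * R.det
        = R.det * R.det * ((t : ℂ) • C + c • 1).det := by ring
      _ = M₂.det * ((t : ℂ) • C + c • 1).det := by rw [hRR2]
      _ = _ := by rw [hdeq, hdetmixC, ← Complex.ofReal_mul]
  have hre1 : M₁.det.re = d * ∏ i, lam i := by rw [hdetM₁, Complex.ofReal_re]
  have hremix : ((t : ℂ) • M₁ + c • M₂).det.re
      = d * ∏ i, (t * lam i + (1 - t)) := by rw [hdetmix, Complex.ofReal_re]
  rw [hre1, hremix, hdre]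
  have hprodpos : 0 < ∏ i, lam i := Finset.prod_pos (fun i _ => hlampos i)
  have hcomb : ∀ i : Fin n, 0 < t * lam i + (1 - t) := by
    intro i
    rcases lt_or_eq_of_le ht1 with h | h
    · nlinarith [mul_nonneg ht0 (hlampos i).le]
    · rw [← h]
      have := hlampos i
      nlinarith
  have hprod2pos : 0 < ∏ i, (t * lam i + (1 - t)) :=
    Finset.prod_pos (fun i _ => hcomb i)
  rw [Real.log_mul hdpos.ne' hprodpos.ne', Real.log_mul hdpos.ne' hprod2pos.ne']
  have key : t * Real.log (∏ i, lam i) ≤ Real.log (∏ i, (t * lam i + (1 - t))) := by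
    rw [Real.log_prod (fun i _ => (hlampos i).ne'),
      Real.log_prod (fun i _ => (hcomb i).ne'), Finset.mul_sum]
    apply Finset.sum_le_sum
    intro i _
    have := strictConcaveOn_log_Ioi.concaveOn.2 (Set.mem_Ioi.mpr (hlampos i))
      (Set.mem_Ioi.mpr (zero_lt_one)) ht0 (by linarith : (0:ℝ) ≤ 1 - t) (by ring)
    simpa [smul_eq_mul, Real.log_one] using this
  nlinarith [key]

theorem stmt_2 (n : ℕ) (T : Matrix (Fin n) (Fin n) ℂ) (hT : T.PosSemidef)
    (P₁ P₂ : Matrix (Fin n) (Fin n) ℂ) (hP₁ : P₁.PosSemidef) (hP₂ : P₂.PosSemidef)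
    (t : ℝ) (ht0 : 0 ≤ t) (ht1 : t ≤ 1) :
    t * Real.log ((1 + T * P₁).det.re) + (1 - t) * Real.log ((1 + T * P₂).det.re)
      ≤ Real.log ((1 + T * ((t : ℂ) • P₁ + ((1 - t : ℝ) : ℂ) • P₂)).det.re) := by
  set c : ℂ := ((1 - t : ℝ) : ℂ) with hc
  open scoped MatrixOrder in set S : Matrix (Fin n) (Fin n) ℂ := CFC.sqrt T with hSdef
  have hSS : S * S = T := by
    open scoped MatrixOrder in exact CFC.sqrt_mul_sqrt_self T hT.nonneg
  have hSH : Sᴴ = S := by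
    open scoped MatrixOrder in exact (CFC.sqrt_nonneg T).posSemidef.1
  -- the conjugated matrices
  have hQ : ∀ {P : Matrix (Fin n) (Fin n) ℂ}, P.PosSemidef → (S * P * S).PosSemidef := by
    intro P hP
    have := hP.mul_mul_conjTranspose_same S
    rwa [hSH] at this
  have hM : ∀ {P : Matrix (Fin n) (Fin n) ℂ}, P.PosSemidef →
      (1 + S * P * S).PosDef := fun hP => Matrix.PosDef.one.add_posSemidef (hQ hP)
  have hdeteq : ∀ P : Matrix (Fin n) (Fin n) ℂ,
      (1 + T * P).det = (1 + S * P * S).det := by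
    intro P
    rw [← hSS, mul_assoc, det_one_add_mul_comm]

  have hcomb : 1 + S * ((t : ℂ) • P₁ + c • P₂) * S
      = (t : ℂ) • (1 + S * P₁ * S) + c • (1 + S * P₂ * S) := by
    have h1 : (t : ℂ) + c = 1 := by rw [hc]; push_cast; ring
    have hone : (t : ℂ) • (1 : Matrix (Fin n) (Fin n) ℂ) + c • 1 = 1 := by
      rw [← add_smul, h1, one_smul]
    have hL : S * ((t : ℂ) • P₁ + c • P₂) * S
        = (t : ℂ) • (S * P₁ * S) + c • (S * P₂ * S) := by
      rw [mul_add, add_mul, mul_smul_comm, mul_smul_comm, smul_mul_assoc, smul_mul_assoc]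
    rw [hL, smul_add, smul_add]
    conv_lhs => rw [← hone]
    abel
  rw [hdeteq P₁, hdeteq P₂, hdeteq _, hcomb]
  exact logdet_concave (hM hP₁) (hM hP₂) t ht0 ht1
end

section
/- The difference of two log-det functions, P ↦ log det(I + A P) − log det(I + B P), with A ≠ B Hermitian positive definite, is in general neither concave nor convex: there exist 2×2 Hermitian positive definite A, B and Hermitian PSD matrices P₁, P₂ witnessing failure of concavity. -/
open Matrix ComplexOrder

theorem stmt_3 :
    ∃ (A B P₁ P₂ : Matrix (Fin 2) (Fin 2) ℂ) (t : ℝ),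
      A.PosDef ∧ B.PosDef ∧ A ≠ B ∧ P₁.PosSemidef ∧ P₂.PosSemidef ∧
      0 < t ∧ t < 1 ∧
      (fun P : Matrix (Fin 2) (Fin 2) ℂ =>
          Real.log ((1 + A * P).det.re) - Real.log ((1 + B * P).det.re))
        ((t : ℂ) • P₁ + ((1 - t : ℝ) : ℂ) • P₂)
      < t * ((fun P : Matrix (Fin 2) (Fin 2) ℂ =>
          Real.log ((1 + A * P).det.re) - Real.log ((1 + B * P).det.re)) P₁)
        + (1 - t) * ((fun P : Matrix (Fin 2) (Fin 2) ℂ =>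
          Real.log ((1 + A * P).det.re) - Real.log ((1 + B * P).det.re)) P₂) := by
  refine ⟨1, Matrix.diagonal ![2, 2], Matrix.diagonal ![1, 0], 0, 1/2,
    Matrix.PosDef.one, ?_, ?_, ?_, Matrix.PosSemidef.zero, by norm_num, by norm_num, ?_⟩
  · rw [Matrix.posDef_diagonal_iff]
    intro i; fin_cases i <;> simp
  · intro h
    have := congrFun (congrFun h 0) 0
    simp [Matrix.diagonal, Matrix.one_apply] at this
  · rw [Matrix.posSemidef_diagonal_iff]
    intro i; fin_cases i <;> simp
  · simp only [smul_zero, add_zero, one_mul, Matrix.mul_zero]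
    have e1 : ((1/2 : ℝ) : ℂ) • Matrix.diagonal ![1, 0] = Matrix.diagonal ![(1/2 : ℂ), 0] := by
      ext i j
      fin_cases i <;> fin_cases j <;> simp [Matrix.diagonal]
    rw [e1]
    have hd : ∀ (a b : ℂ), ((1 : Matrix (Fin 2) (Fin 2) ℂ) + Matrix.diagonal ![a, b]).det
        = (1 + a) * (1 + b) := by
      intro a b
      rw [Matrix.det_fin_two]
      simp [Matrix.one_apply, Matrix.diagonal]
    have hm : ∀ (a b c d : ℂ), Matrix.diagonal ![a, b] * Matrix.diagonal ![c, d]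
        = Matrix.diagonal ![a*c, b*d] := by
      intro a b c d
      rw [Matrix.diagonal_mul_diagonal]
      ext i j
      fin_cases i <;> fin_cases j <;> simp [Matrix.diagonal]
    rw [hm, hm, hd, hd, hd, hd]
    norm_num
    have l32 : Real.log 32 = 5 * Real.log 2 := by
      rw [show (32:ℝ) = 2^5 by norm_num, Real.log_pow]; push_cast; ring
    have l27 : Real.log 27 = 3 * Real.log 3 := by
      rw [show (27:ℝ) = 3^3 by norm_num, Real.log_pow]; push_cast; ring
    have h : Real.log 27 < Real.log 32 := Real.log_lt_log (by norm_num) (by norm_num)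
    have h32 : Real.log (3/2) = Real.log 3 - Real.log 2 := Real.log_div (by norm_num) (by norm_num)
    rw [h32]
    linarith
end

section
/- Fix positive reals ρ, β and a positive definite Hermitian n×n matrix R with n = βM (M a positive integer). The map δ ↦ (ρ/n)·tr(R(I + δR)^{-1}) from [0,∞) to (0,∞) is strictly decreasing and continuous, and is bounded above by ρ·λ_max(R); hence composed fixed-point equations of the form e = (ρ/n)tr(R(I+δR)^{-1}), δ = (ρ/M)tr(Q(I+βeQ)^{-1}) with Q Hermitian PSD admit at least one solution (e, δ) ∈ [0,∞)² by the intermediate value theorem. -/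
open Matrix ComplexOrder

private lemma trace_resolvent {k : ℕ} (A : Matrix (Fin k) (Fin k) ℂ) (hA : A.IsHermitian)
    (c : ℝ) (hc : ∀ i, 1 + c * hA.eigenvalues i ≠ 0) :
    (A * (1 + (c : ℂ) • A)⁻¹).trace
      = ((∑ i, hA.eigenvalues i / (1 + c * hA.eigenvalues i) : ℝ) : ℂ) := by
  set U : Matrix (Fin k) (Fin k) ℂ := (hA.eigenvectorUnitary : Matrix (Fin k) (Fin k) ℂ) with hU
  have hUU : U * star U = 1 := (Matrix.mem_unitaryGroup_iff).mp hA.eigenvectorUnitary.2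
  have hUU' : star U * U = 1 := (Matrix.mem_unitaryGroup_iff').mp hA.eigenvectorUnitary.2
  set w : Fin k → ℂ := fun i => 1 + (c : ℂ) * (hA.eigenvalues i : ℂ) with hw
  have hwne : ∀ i, w i ≠ 0 := by
    intro i
    have : w i = ((1 + c * hA.eigenvalues i : ℝ) : ℂ) := by push_cast [hw]; ring
    rw [this]
    exact_mod_cast hc i
  set D : Matrix (Fin k) (Fin k) ℂ := diagonal (RCLike.ofReal ∘ hA.eigenvalues) with hD
  have hspec : A = U * D * star U := hA.spectral_theorem
  have h1 : (1 : Matrix (Fin k) (Fin k) ℂ) + (c : ℂ) • A = U * diagonal w * star U := by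
    have : diagonal w = 1 + (c : ℂ) • D := by
      rw [hD, ← diagonal_one, ← diagonal_smul, ← diagonal_add]
      congr 1
    rw [this, hspec]
    simp [Matrix.mul_add, Matrix.add_mul, Matrix.mul_smul, Matrix.smul_mul, hUU, mul_assoc]
  have hdinv : diagonal w * diagonal w⁻¹ = 1 := by
    rw [diagonal_mul_diagonal]
    funext i j
    rcases eq_or_ne i j with rfl | h
    · simp [mul_inv_cancel₀ (hwne i)]
    · simp [diagonal_apply_ne _ h, Matrix.one_apply_ne h]
  have hinv : (1 + (c : ℂ) • A)⁻¹ = U * diagonal w⁻¹ * star U := by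
    rw [h1]
    apply Matrix.inv_eq_right_inv
    calc U * diagonal w * star U * (U * diagonal w⁻¹ * star U)
        = U * diagonal w * (star U * U) * diagonal w⁻¹ * star U := by
          noncomm_ring
      _ = 1 := by rw [hUU']; simp [mul_assoc, hdinv, hUU]
  have hprod : A * (1 + (c : ℂ) • A)⁻¹ = U * (D * diagonal w⁻¹) * star U := by
    rw [hinv]
    calc A * (U * diagonal w⁻¹ * star U)
        = U * D * (star U * U) * diagonal w⁻¹ * star U := by rw [hspec]; noncomm_ring
      _ = U * (D * diagonal w⁻¹) * star U := by rw [hUU']; noncomm_ring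
  rw [hprod, Matrix.trace_mul_cycle, ← mul_assoc, hUU', one_mul]
  rw [hD, diagonal_mul_diagonal, trace_diagonal]
  push_cast
  apply Finset.sum_congr rfl
  intro i _
  have hwi : w i = 1 + (c : ℂ) * (hA.eigenvalues i : ℂ) := rfl
  simp only [Pi.inv_apply, Function.comp_apply, hwi, RCLike.ofReal_alg]
  rw [div_eq_mul_inv]
  norm_num

private noncomputable def gfun {k : ℕ} (ev : Fin k → ℝ) (δ : ℝ) : ℝ :=
  ∑ i, ev i / (1 + δ * ev i)

private lemma gfun_strictAnti {k : ℕ} (ev : Fin k → ℝ) (hev : ∀ i, 0 < ev i) (hk : 0 < k) :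
    StrictAntiOn (gfun ev) (Set.Ici 0) := by
  intro x hx y hy hxy
  have hx' : (0:ℝ) ≤ x := hx
  apply Finset.sum_lt_sum_of_nonempty
  · exact Finset.univ_nonempty_iff.mpr ⟨⟨0, hk⟩⟩
  · intro i _
    have h1 : 0 < 1 + x * ev i := by nlinarith [hev i]
    have h2 : 0 < 1 + y * ev i := by nlinarith [hev i, hx.trans hxy.le]
    apply div_lt_div_of_pos_left (hev i) h1
    nlinarith [hev i]

private lemma gfun_continuousOn {k : ℕ} (ev : Fin k → ℝ) (hev : ∀ i, 0 ≤ ev i) :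
    ContinuousOn (gfun ev) (Set.Ici 0) := by
  apply continuousOn_finset_sum
  intro i _
  apply ContinuousOn.div continuousOn_const
  · fun_prop
  · intro x hx
    have hx' : (0:ℝ) ≤ x := hx
    nlinarith [hev i, mul_nonneg hx' (hev i)]

private lemma gfun_le {k : ℕ} (ev : Fin k → ℝ) (hev : ∀ i, 0 ≤ ev i) {δ : ℝ} (hδ : 0 ≤ δ) :
    gfun ev δ ≤ ∑ i, ev i := by
  apply Finset.sum_le_sum
  intro i _
  have h1 : 0 < 1 + δ * ev i := by nlinarith [hev i, mul_nonneg hδ (hev i)]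
  rw [div_le_iff₀ h1]
  nlinarith [mul_nonneg hδ (mul_nonneg (hev i) (hev i))]

private lemma gfun_nonneg {k : ℕ} (ev : Fin k → ℝ) (hev : ∀ i, 0 ≤ ev i) {δ : ℝ} (hδ : 0 ≤ δ) :
    0 ≤ gfun ev δ := by
  apply Finset.sum_nonneg
  intro i _
  have h1 : 0 < 1 + δ * ev i := by nlinarith [hev i, mul_nonneg hδ (hev i)]
  exact div_nonneg (hev i) h1.le

theorem stmt_7 (M n : ℕ) (hM : 0 < M) (ρ β : ℝ) (hρ : 0 < ρ) (hβ : 0 < β)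
    (hn : (n : ℝ) = β * M)
    (R : Matrix (Fin n) (Fin n) ℂ) (hR : R.PosDef)
    (Q : Matrix (Fin M) (Fin M) ℂ) (hQ : Q.PosSemidef) :
    let f : ℝ → ℝ := fun δ => (ρ / n) * (R * (1 + (δ : ℂ) • R)⁻¹).trace.re
    StrictAntiOn f (Set.Ici 0) ∧
    ContinuousOn f (Set.Ici 0) ∧
    (∀ δ : ℝ, 0 ≤ δ → f δ ≤ ρ * (⨆ i : Fin n, hR.1.eigenvalues i)) ∧
    (∃ e δ : ℝ, 0 ≤ e ∧ 0 ≤ δ ∧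
      e = (ρ / n) * (R * (1 + (δ : ℂ) • R)⁻¹).trace.re ∧
      δ = (ρ / M) * (Q * (1 + ((β * e : ℝ) : ℂ) • Q)⁻¹).trace.re) := by
  intro f
  have hnR : (0:ℝ) < (n:ℝ) := by rw [hn]; positivity
  have hn0 : 0 < n := by exact_mod_cast hnR
  have hρn : 0 < ρ / n := div_pos hρ hnR
  set ev : Fin n → ℝ := hR.1.eigenvalues with hevdef
  have hev : ∀ i, 0 < ev i := fun i => hR.eigenvalues_pos i
  have hev' : ∀ i, 0 ≤ ev i := fun i => (hev i).le
  set μ : Fin M → ℝ := hQ.1.eigenvalues with hμdef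
  have hμ : ∀ j, 0 ≤ μ j := fun j => hQ.eigenvalues_nonneg j
  -- key identity for f
  have key : ∀ δ : ℝ, 0 ≤ δ → f δ = (ρ / n) * gfun ev δ := by
    intro δ hδ
    have hne : ∀ i, 1 + δ * hR.1.eigenvalues i ≠ 0 := by
      intro i
      have := hev i
      nlinarith [mul_nonneg hδ (hev i).le]
    have := trace_resolvent R hR.1 δ hne
    simp only [f, this, Complex.ofReal_re, gfun]
    rfl
  -- key identity for the Q-side
  set Fq : ℝ → ℝ := fun e => (ρ / M) * gfun μ (β * e) with hFq
  have hMR : (0:ℝ) < (M:ℝ) := by exact_mod_cast hM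
  have keyQ : ∀ e : ℝ, 0 ≤ e →
      (ρ / M) * (Q * (1 + ((β * e : ℝ) : ℂ) • Q)⁻¹).trace.re = Fq e := by
    intro e he
    have hne : ∀ j, 1 + (β * e) * hQ.1.eigenvalues j ≠ 0 := by
      intro j
      have := hμ j
      nlinarith [mul_nonneg (mul_nonneg hβ.le he) (hμ j)]
    have := trace_resolvent Q hQ.1 (β * e) hne
    simp only [this, Complex.ofReal_re, hFq, gfun]
    rfl
  have hanti : StrictAntiOn f (Set.Ici 0) := by
    intro x hx y hy hxy
    rw [key x hx, key y hy]
    exact mul_lt_mul_of_pos_left (gfun_strictAnti ev hev hn0 hx hy hxy) hρn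
  have hcont : ContinuousOn f (Set.Ici 0) := by
    apply ContinuousOn.congr (continuousOn_const.mul (gfun_continuousOn ev hev'))
    intro x hx
    exact key x hx
  refine ⟨hanti, hcont, ?_, ?_⟩
  · -- bound
    intro δ hδ
    rw [key δ hδ]
    have hbdd : BddAbove (Set.range ev) := Set.Finite.bddAbove (Set.finite_range ev)
    have hsum : ∑ i, ev i ≤ (n : ℝ) * (⨆ i : Fin n, ev i) := by
      calc ∑ i, ev i ≤ ∑ _i : Fin n, (⨆ i : Fin n, ev i) :=
            Finset.sum_le_sum fun i _ => le_ciSup hbdd i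
        _ = (n : ℝ) * (⨆ i : Fin n, ev i) := by
            simp [Finset.sum_const, nsmul_eq_mul]
    calc (ρ / n) * gfun ev δ ≤ (ρ / n) * ((n : ℝ) * (⨆ i : Fin n, ev i)) := by
          apply mul_le_mul_of_nonneg_left _ hρn.le
          exact (gfun_le ev hev' hδ).trans hsum
      _ = ρ * (⨆ i : Fin n, ev i) := by field_simp
  · -- existence
    have hFq0 : ∀ e : ℝ, 0 ≤ e → 0 ≤ Fq e := by
      intro e he
      exact mul_nonneg (div_pos hρ hMR).le (gfun_nonneg μ hμ (by positivity))
    set G : ℝ → ℝ := fun e => (ρ / n) * gfun ev (Fq e) with hG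
    set C : ℝ := (ρ / n) * gfun ev 0 with hC
    have hgf0 : gfun ev 0 = ∑ i, ev i := by simp [gfun]
    have hGle : ∀ e : ℝ, 0 ≤ e → G e ≤ C := by
      intro e he
      apply mul_le_mul_of_nonneg_left _ hρn.le
      rw [hgf0]
      exact gfun_le ev hev' (hFq0 e he)
    have hGnn : ∀ e : ℝ, 0 ≤ e → 0 ≤ G e := by
      intro e he
      exact mul_nonneg hρn.le (gfun_nonneg ev hev' (hFq0 e he))
    have hC0 : 0 ≤ C := by
      rw [hC, hgf0]
      exact mul_nonneg hρn.le (Finset.sum_nonneg fun i _ => hev' i)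
    -- continuity of G on Icc 0 C
    have hFqcont : ContinuousOn Fq (Set.Ici 0) := by
      apply continuousOn_const.mul
      apply ((gfun_continuousOn μ hμ).comp
        ((continuous_const.mul continuous_id).continuousOn))
      intro x hx
      have : (0:ℝ) ≤ x := hx
      simp only [Set.mem_Ici]
      exact mul_nonneg hβ.le this
    have hGcont : ContinuousOn G (Set.Ici 0) := by
      apply continuousOn_const.mul
      apply (gfun_continuousOn ev hev').comp hFqcont
      intro x hx
      exact hFq0 x hx
    set φ : ℝ → ℝ := fun e => e - G e with hφ
    have hφcont : ContinuousOn φ (Set.Icc 0 C) := by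
      apply ContinuousOn.sub continuousOn_id
      exact hGcont.mono (Set.Icc_subset_Ici_self)
    have hφ0 : φ 0 ≤ 0 := by simp [hφ, hGnn 0 le_rfl]
    have hφC : 0 ≤ φ C := by simp [hφ, hGle C hC0]
    have := intermediate_value_Icc hC0 hφcont
    have h0mem : (0:ℝ) ∈ Set.Icc (φ 0) (φ C) := ⟨hφ0, hφC⟩
    obtain ⟨e, he_mem, he_eq⟩ := this h0mem
    have he0 : 0 ≤ e := he_mem.1
    have heG : e = G e := by
      have : e - G e = 0 := he_eq
      linarith
    refine ⟨e, Fq e, he0, hFq0 e he0, ?_, ?_⟩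
    · exact heG.trans (key (Fq e) (hFq0 e he0)).symm
    · rw [keyQ e he0]
end

section
/- Let T_M, T_E, P be n×n Hermitian PSD matrices and a, b > 0. If b·T_E − a·T_M is positive semidefinite, then log det(I + a T_M^{1/2} P T_M^{1/2}) ≤ log det(I + b T_E^{1/2} P T_E^{1/2}) for every Hermitian PSD P; hence the large-system secrecy-rate objective [log det(I + a T_M P) − log det(I + b T_E P)]⁺ is identically zero. -/
open Matrix ComplexOrder

variable {n : ℕ}

noncomputable def Matrix.PosSemidef.sqrt {A : Matrix (Fin n) (Fin n) ℂ} (hA : A.PosSemidef) :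
    Matrix (Fin n) (Fin n) ℂ :=
  hA.1.eigenvectorUnitary.1 * diagonal ((fun x : ℝ => (x : ℂ)) ∘ (hA.1.eigenvalues · |>.sqrt)) *
    (star hA.1.eigenvectorUnitary : Matrix (Fin n) (Fin n) ℂ)

lemma Matrix.PosSemidef.posSemidef_sqrt {A : Matrix (Fin n) (Fin n) ℂ} (hA : A.PosSemidef) :
    hA.sqrt.PosSemidef := by
  have hD : (diagonal ((fun x : ℝ => (x : ℂ)) ∘ (hA.1.eigenvalues · |>.sqrt))).PosSemidef := by
    rw [posSemidef_diagonal_iff]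
    intro i
    simp only [Function.comp_apply, Complex.zero_le_real]
    exact Real.sqrt_nonneg _
  have := hD.mul_mul_conjTranspose_same (hA.1.eigenvectorUnitary : Matrix (Fin n) (Fin n) ℂ)
  unfold Matrix.PosSemidef.sqrt
  rwa [← star_eq_conjTranspose] at this

lemma Matrix.PosSemidef.sqrt_mul_self {A : Matrix (Fin n) (Fin n) ℂ} (hA : A.PosSemidef) :
    hA.sqrt * hA.sqrt = A := by
  have hU : (star hA.1.eigenvectorUnitary : Matrix (Fin n) (Fin n) ℂ) *
      (hA.1.eigenvectorUnitary : Matrix (Fin n) (Fin n) ℂ) = 1 :=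
    Matrix.mem_unitaryGroup_iff'.mp hA.1.eigenvectorUnitary.2
  conv_rhs => rw [hA.1.spectral_theorem, Unitary.conjStarAlgAut_apply]
  unfold Matrix.PosSemidef.sqrt
  have hmid : ∀ X Y : Matrix (Fin n) (Fin n) ℂ,
      (hA.1.eigenvectorUnitary.1 * X * (star hA.1.eigenvectorUnitary : Matrix (Fin n) (Fin n) ℂ)) *
      (hA.1.eigenvectorUnitary.1 * Y * (star hA.1.eigenvectorUnitary : Matrix (Fin n) (Fin n) ℂ))
      = hA.1.eigenvectorUnitary.1 * (X * Y) * (star hA.1.eigenvectorUnitary : Matrix (Fin n) (Fin n) ℂ) := by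
    intro X Y
    simp only [Matrix.mul_assoc]
    rw [← Matrix.mul_assoc (star _ : Matrix (Fin n) (Fin n) ℂ), hU, Matrix.one_mul]
  rw [hmid, diagonal_mul_diagonal]
  congr 2
  congr 1
  funext i
  simp only [Function.comp_apply]
  rw [← Complex.ofReal_mul, Real.mul_self_sqrt (hA.eigenvalues_nonneg i)]
  rfl

lemma my_smul_psd {A : Matrix (Fin n) (Fin n) ℂ} (hA : A.PosSemidef)
    {a : ℝ} (ha : 0 ≤ a) : ((a : ℂ) • A).PosSemidef := by
  refine .of_dotProduct_mulVec_nonneg ?_ ?_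
  · show ((a : ℂ) • A)ᴴ = _
    rw [conjTranspose_smul, hA.1.eq]
    congr 1
    simp [Complex.ext_iff]
  · intro x
    rw [smul_mulVec, dotProduct_smul]
    have h0 := hA.dotProduct_mulVec_nonneg x
    rw [Complex.le_def] at h0 ⊢
    obtain ⟨h1, h2⟩ := h0
    simp only [Complex.zero_re, Complex.zero_im] at *
    constructor
    · simp [Complex.mul_re, ← h2]
      positivity
    · simp [Complex.mul_im, ← h2]

lemma my_det_swap (c : ℂ) (A B : Matrix (Fin n) (Fin n) ℂ) :
    (1 + c • (A * B)).det = (1 + c • (B * A)).det := by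
  rw [← Matrix.mul_smul, det_one_add_mul_comm, Matrix.smul_mul]

lemma my_one_le_det_one_add {K : Matrix (Fin n) (Fin n) ℂ} (hK : K.PosSemidef) :
    ∃ r : ℝ, 1 ≤ r ∧ (1 + K).det = (r : ℂ) := by
  set U := (hK.1.eigenvectorUnitary : Matrix (Fin n) (Fin n) ℂ) with hUdef
  set d := hK.1.eigenvalues with hd
  have hU : U * star U = 1 := Matrix.mem_unitaryGroup_iff.mp hK.1.eigenvectorUnitary.2
  have h1 : U * (1 + diagonal (RCLike.ofReal ∘ d)) * star U = 1 + K := by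
    rw [mul_add, mul_one, add_mul, hU]
    conv_rhs => rw [hK.1.spectral_theorem, Unitary.conjStarAlgAut_apply]
  refine ⟨∏ i, (1 + d i), ?_, ?_⟩
  · calc (1:ℝ) = ∏ _i : Fin n, (1:ℝ) := by simp
      _ ≤ ∏ i, (1 + d i) := Finset.prod_le_prod (fun i _ => by norm_num)
          (fun i _ => by linarith [hK.eigenvalues_nonneg i])
  have : (1 + K).det = ((1 + diagonal (RCLike.ofReal ∘ d) : Matrix (Fin n) (Fin n) ℂ)).det := by
    rw [← h1, det_mul_right_comm, hU, one_mul]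
  rw [this]
  have : (1 : Matrix (Fin n) (Fin n) ℂ) + diagonal (RCLike.ofReal ∘ d)
      = diagonal (fun i => 1 + (d i : ℂ)) := by
    rw [← diagonal_one, diagonal_add]
    rfl
  rw [this, det_diagonal]
  push_cast
  rfl

lemma my_det_re_mono {C D : Matrix (Fin n) (Fin n) ℂ} (hC : C.PosSemidef)
    (hN : (D - C).PosSemidef) :
    0 < (1 + C).det.re ∧ (1 + C).det.re ≤ (1 + D).det.re := by
  have hX : (1 + C).PosDef := Matrix.PosDef.one.add_posSemidef hC
  set S := hX.posSemidef.sqrt with hSdef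
  have hSS : S * S = 1 + C := hX.posSemidef.sqrt_mul_self
  have hdetX : (0 : ℂ) < (1 + C).det := hX.det_pos
  have hdetS : IsUnit S.det := by
    have h := hdetX.ne'.isUnit
    rw [← hSS, det_mul] at h
    exact isUnit_of_mul_isUnit_left h
  have hSinv : S * S⁻¹ = 1 := mul_nonsing_inv _ hdetS
  have hSinv' : S⁻¹ * S = 1 := nonsing_inv_mul _ hdetS
  have hSh : S⁻¹ᴴ = S⁻¹ := hX.posSemidef.posSemidef_sqrt.1.inv
  have hK : (S⁻¹ * (D - C) * S⁻¹).PosSemidef := by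
    have h := hN.conjTranspose_mul_mul_same S⁻¹
    rwa [hSh] at h
  obtain ⟨r, hr1, hrdet⟩ := my_one_le_det_one_add hK
  have hfact : S * (1 + S⁻¹ * (D - C) * S⁻¹) * S = 1 + D := by
    rw [mul_add, mul_one, add_mul, hSS]
    have : S * (S⁻¹ * (D - C) * S⁻¹) * S = (S * S⁻¹) * (D - C) * (S⁻¹ * S) := by
      simp only [Matrix.mul_assoc]
    rw [this, hSinv, hSinv', one_mul, mul_one]
    abel
  have hdd : (1 + D).det = (1 + C).det * r := by
    rw [← hfact, det_mul, det_mul, hrdet, ← hSS, det_mul]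
    ring
  rw [Complex.lt_def] at hdetX
  obtain ⟨hre, him⟩ := hdetX
  simp only [Complex.zero_re, Complex.zero_im] at hre him
  refine ⟨hre, ?_⟩
  rw [hdd]
  have : ((1 + C).det * (r : ℂ)).re = (1 + C).det.re * r := by
    simp [Complex.mul_re, ← him]
  rw [this]
  nlinarith

theorem stmt_10 (n : ℕ) (TM TE P : Matrix (Fin n) (Fin n) ℂ)
    (hTM : TM.PosSemidef) (hTE : TE.PosSemidef) (hP : P.PosSemidef)
    (a b : ℝ) (ha : 0 < a) (hb : 0 < b)
    (hdom : (((b : ℂ) • TE) - ((a : ℂ) • TM)).PosSemidef) :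
    Real.log ((1 + (a : ℂ) • ((hTM.1.eigenvectorUnitary.1 * diagonal ((fun x : ℝ => (x : ℂ)) ∘ (hTM.1.eigenvalues · |>.sqrt)) * (star hTM.1.eigenvectorUnitary : Matrix (Fin n) (Fin n) ℂ)) * P * (hTM.1.eigenvectorUnitary.1 * diagonal ((fun x : ℝ => (x : ℂ)) ∘ (hTM.1.eigenvalues · |>.sqrt)) * (star hTM.1.eigenvectorUnitary : Matrix (Fin n) (Fin n) ℂ)))).det.re) ≤
      Real.log ((1 + (b : ℂ) • ((hTE.1.eigenvectorUnitary.1 * diagonal ((fun x : ℝ => (x : ℂ)) ∘ (hTE.1.eigenvalues · |>.sqrt)) * (star hTE.1.eigenvectorUnitary : Matrix (Fin n) (Fin n) ℂ)) * P * (hTE.1.eigenvectorUnitary.1 * diagonal ((fun x : ℝ => (x : ℂ)) ∘ (hTE.1.eigenvalues · |>.sqrt)) * (star hTE.1.eigenvectorUnitary : Matrix (Fin n) (Fin n) ℂ)))).det.re) ∧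
    max (Real.log ((1 + (a : ℂ) • (TM * P)).det.re) -
         Real.log ((1 + (b : ℂ) • (TE * P)).det.re)) 0 = 0 := by
  show Real.log ((1 + (a : ℂ) • (hTM.sqrt * P * hTM.sqrt)).det.re) ≤
      Real.log ((1 + (b : ℂ) • (hTE.sqrt * P * hTE.sqrt)).det.re) ∧
    max (Real.log ((1 + (a : ℂ) • (TM * P)).det.re) -
         Real.log ((1 + (b : ℂ) • (TE * P)).det.re)) 0 = 0
  set s := hP.sqrt with hsdef
  have hsh : sᴴ = s := hP.posSemidef_sqrt.1
  set C : Matrix (Fin n) (Fin n) ℂ := (a : ℂ) • (s * TM * s) with hCdef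
  set D : Matrix (Fin n) (Fin n) ℂ := (b : ℂ) • (s * TE * s) with hDdef
  have hC : C.PosSemidef := by
    have h1 : (s * TM * s).PosSemidef := by
      have := hTM.conjTranspose_mul_mul_same s
      rwa [hsh] at this
    exact my_smul_psd h1 ha.le
  have hDC : D - C = s * (((b : ℂ) • TE) - ((a : ℂ) • TM)) * s := by
    rw [hCdef, hDdef]
    simp only [Matrix.mul_sub, Matrix.sub_mul, Matrix.mul_smul, Matrix.smul_mul]
  have hN : (D - C).PosSemidef := by
    rw [hDC]
    have := hdom.conjTranspose_mul_mul_same s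
    rwa [hsh] at this
  obtain ⟨hpos, hle⟩ := my_det_re_mono hC hN
  have eqM : (1 + (a : ℂ) • (hTM.sqrt * P * hTM.sqrt)).det = (1 + C).det := by
    rw [mul_assoc, my_det_swap, mul_assoc, hTM.sqrt_mul_self, ← hP.sqrt_mul_self,
      mul_assoc, my_det_swap]
  have eqE : (1 + (b : ℂ) • (hTE.sqrt * P * hTE.sqrt)).det = (1 + D).det := by
    rw [mul_assoc, my_det_swap, mul_assoc, hTE.sqrt_mul_self, ← hP.sqrt_mul_self,
      mul_assoc, my_det_swap]
  have eqM2 : (1 + (a : ℂ) • (TM * P)).det = (1 + C).det := by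
    rw [← hTM.sqrt_mul_self, mul_assoc, my_det_swap]
    exact eqM
  have eqE2 : (1 + (b : ℂ) • (TE * P)).det = (1 + D).det := by
    rw [← hTE.sqrt_mul_self, mul_assoc, my_det_swap]
    exact eqE
  have hlog : Real.log ((1 + C).det.re) ≤ Real.log ((1 + D).det.re) :=
    Real.log_le_log hpos hle
  refine ⟨by rw [eqM, eqE]; exact hlog, ?_⟩
  rw [eqM2, eqE2]
  exact max_eq_right (sub_nonpos.mpr hlog)
end
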